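/- For θ > 0, h > 0 and constants c₆ ≥ 0, the infimum over R > 3 of the function F(R) = t h π²/(R + c₆)² + (1/(2^θ(θ+1)))(R-3)^{θ+1} satisfies lim_{t→∞} t^{-(1+θ)/(3+θ)} inf_{R>3} F(R) = ((3+θ)/(1+θ)) (hπ²/4)^{(1+θ)/(3+θ)}. -/

import Mathlib

open Real Filter

private lemma amgm_applied {θ a m S : ℝ} (hθ : 0 < θ) (ha : 0 < a) (hm : 0 < m) (hS : 0 < S) :
    (3+θ)/(1+θ) * (m^2 * a / 4) ^ ((1+θ)/(3+θ))
      ≤ a / S ^ 2 + (m*S) ^ (θ+1) / (2^θ*(θ+1)) := by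
  have hθ1 : (0:ℝ) < 1 + θ := by linarith
  have hθ3 : (0:ℝ) < 3 + θ := by linarith
  set w₁ : ℝ := (1+θ)/(3+θ) with hw₁d
  set w₂ : ℝ := 2/(3+θ) with hw₂d
  have hw₁ : 0 < w₁ := div_pos hθ1 hθ3
  have hw₂ : 0 < w₂ := div_pos two_pos hθ3
  have hw : w₁ + w₂ = 1 := by rw [hw₁d, hw₂d]; field_simp; ring
  set p₁ : ℝ := a / S ^ 2 / w₁ with hp₁d
  set p₂ : ℝ := (m*S) ^ (θ+1) / (2^θ*(θ+1)) / w₂ with hp₂d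
  have hp₁ : 0 < p₁ := by positivity
  have hp₂ : 0 < p₂ := by positivity
  have H := Real.geom_mean_le_arith_mean2_weighted hw₁.le hw₂.le hp₁.le hp₂.le hw
  have e₁ : w₁ * p₁ = a / S ^ 2 := by rw [hp₁d]; field_simp
  have e₂ : w₂ * p₂ = (m*S) ^ (θ+1) / (2^θ*(θ+1)) := by rw [hp₂d]; field_simp
  rw [e₁, e₂] at H
  refine le_trans (le_of_eq ?_) H
  have hL : (0:ℝ) < (3+θ)/(1+θ) * (m^2 * a / 4) ^ w₁ := by positivity
  have hR : (0:ℝ) < p₁ ^ w₁ * p₂ ^ w₂ := by positivity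
  rw [← Real.exp_log hL, ← Real.exp_log hR]
  congr 1
  have h4 : Real.log 4 = 2 * Real.log 2 := by
    rw [show (4:ℝ) = 2^2 by norm_num, Real.log_pow]; push_cast; ring
  have hc : Real.log (θ+1) = Real.log (1+θ) := by rw [add_comm]
  rw [hp₁d, hp₂d, hw₁d, hw₂d]
  simp (disch := positivity) only [Real.log_div, Real.log_mul, Real.log_rpow, Real.log_pow]
  rw [h4, hc]
  push_cast
  field_simp
  ring

private lemma upper_eq1 {θ A : ℝ} (hθ : 0 < θ) (hA : 0 < A) :
    4 * A / (2 * A ^ ((1:ℝ)/(3+θ))) ^ 2 = A ^ ((1+θ)/(3+θ)) := by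
  have hθ3 : (0:ℝ) < 3 + θ := by linarith
  have h1 : (0:ℝ) < 4 * A / (2 * A ^ ((1:ℝ)/(3+θ))) ^ 2 := by positivity
  have h2 : (0:ℝ) < A ^ ((1+θ)/(3+θ)) := by positivity
  rw [← Real.exp_log h1, ← Real.exp_log h2]
  congr 1
  simp (disch := positivity) only [Real.log_div, Real.log_mul, Real.log_rpow, Real.log_pow]
  rw [show Real.log 4 = 2 * Real.log 2 by
    rw [show (4:ℝ) = 2^2 by norm_num, Real.log_pow]; push_cast; ring]
  field_simp
  ring

private lemma upper_eq2 {θ A : ℝ} (hθ : 0 < θ) (hA : 0 < A) :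
    (2 * A ^ ((1:ℝ)/(3+θ))) ^ (θ+1) / (2^θ*(θ+1)) = 2/(θ+1) * A ^ ((1+θ)/(3+θ)) := by
  have hθ3 : (0:ℝ) < 3 + θ := by linarith
  have hθ1 : (0:ℝ) < θ + 1 := by linarith
  have h1 : (0:ℝ) < (2 * A ^ ((1:ℝ)/(3+θ))) ^ (θ+1) / (2^θ*(θ+1)) := by positivity
  have h2 : (0:ℝ) < 2/(θ+1) * A ^ ((1+θ)/(3+θ)) := by positivity
  rw [← Real.exp_log h1, ← Real.exp_log h2]
  congr 1
  simp (disch := positivity) only [Real.log_div, Real.log_mul, Real.log_rpow, Real.log_pow]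
  field_simp
  ring

set_option maxHeartbeats 800000 in
theorem stmt_8 (θ h c₆ : ℝ) (hθ : 0 < θ) (hh : 0 < h) (hc₆ : 0 ≤ c₆) :
    Tendsto (fun t : ℝ =>
        t ^ (-((1 + θ) / (3 + θ))) *
          sInf ((fun R : ℝ => t * h * π ^ 2 / (R + c₆) ^ 2
            + (R - 3) ^ (θ + 1) / (2 ^ θ * (θ + 1))) '' Set.Ioi 3))
      atTop
      (nhds ((3 + θ) / (1 + θ) * (h * π ^ 2 / 4) ^ ((1 + θ) / (3 + θ)))) := by
  have hπ : (0:ℝ) < π := Real.pi_pos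
  have hθ1 : (0:ℝ) < 1 + θ := by linarith
  have hθ3 : (0:ℝ) < 3 + θ := by linarith
  set α : ℝ := (1+θ)/(3+θ) with hαd
  have hα0 : 0 < α := div_pos hθ1 hθ3
  have hα1 : α < 1 := by rw [hαd, div_lt_one hθ3]; linarith
  set B : ℝ := h * π ^ 2 with hBd
  have hB : 0 < B := by positivity
  set L : ℝ := (3+θ)/(1+θ) * (B/4) ^ α with hLd
  have hL : 0 < L := by positivity
  have hbdd : ∀ t : ℝ, 0 ≤ t → BddBelow ((fun R : ℝ => t * h * π ^ 2 / (R + c₆) ^ 2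
      + (R - 3) ^ (θ + 1) / (2 ^ θ * (θ + 1))) '' Set.Ioi 3) := by
    intro t ht
    refine ⟨0, ?_⟩
    rintro x ⟨R, hR, rfl⟩
    simp only [Set.mem_Ioi] at hR
    have h1 : (0:ℝ) ≤ R - 3 := by linarith
    exact add_nonneg (div_nonneg (by positivity) (by positivity))
      (div_nonneg (Real.rpow_nonneg h1 _) (by positivity))
  have upper : ∀ t : ℝ, 0 < t → sInf ((fun R : ℝ => t * h * π ^ 2 / (R + c₆) ^ 2
      + (R - 3) ^ (θ + 1) / (2 ^ θ * (θ + 1))) '' Set.Ioi 3) ≤ L * t ^ α := by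
    intro t ht
    set A : ℝ := t * B / 4 with hAd
    have hA : 0 < A := by positivity
    set ρ : ℝ := A ^ ((1:ℝ)/(3+θ)) with hρd
    have hρ : 0 < ρ := Real.rpow_pos_of_pos hA _
    have hmem : (3 + 2*ρ) ∈ Set.Ioi (3:ℝ) := by
      simp only [Set.mem_Ioi]; linarith
    refine le_trans (csInf_le (hbdd t ht.le) (Set.mem_image_of_mem _ hmem)) ?_
    have e4 : t * h * π ^ 2 = 4 * A := by rw [hAd, hBd]; ring
    calc t * h * π ^ 2 / (3 + 2*ρ + c₆) ^ 2 + (3 + 2*ρ - 3) ^ (θ+1) / (2^θ*(θ+1))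
        ≤ t * h * π ^ 2 / (2*ρ) ^ 2 + (2*ρ) ^ (θ+1) / (2^θ*(θ+1)) := by
          rw [show (3:ℝ) + 2*ρ - 3 = 2*ρ by ring]
          have h2ρ : (0:ℝ) < 2*ρ := by linarith
          gcongr <;> linarith
      _ = A ^ α + 2/(θ+1) * A ^ α := by
          rw [e4, hρd, upper_eq1 hθ hA, upper_eq2 hθ hA]
      _ = (3+θ)/(1+θ) * A ^ α := by field_simp; ring
      _ = L * t ^ α := by
          rw [hLd, hAd, show t * B / 4 = t * (B/4) by ring,
            Real.mul_rpow ht.le (by positivity)]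
          ring
  rw [Metric.tendsto_nhds]
  intro ε hε
  set δ : ℝ := min (1/2) (ε/(4*L)) with hδd
  have hδ0 : 0 < δ := lt_min (by norm_num) (by positivity)
  have hδh : δ ≤ 1/2 := min_le_left _ _
  have hδε : δ ≤ ε/(4*L) := min_le_right _ _
  set m : ℝ := 1 - δ with hmd
  have hm0 : 0 < m := by rw [hmd]; linarith
  have hm1 : m ≤ 1 := by rw [hmd]; linarith
  have h1m : 1 - m = δ := by rw [hmd]; ring
  set c : ℝ := 3 + c₆ with hcd
  have hc : 0 < c := by rw [hcd]; linarith
  have hev1 : ∀ᶠ t : ℝ in atTop, L * c^2 / (B * (1-m)^2) ≤ t ^ (1-α) :=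
    (tendsto_rpow_atTop (by linarith : (0:ℝ) < 1-α)).eventually_ge_atTop _
  filter_upwards [hev1, eventually_ge_atTop (1:ℝ)] with t hth ht1
  have ht : (0:ℝ) < t := lt_of_lt_of_le one_pos ht1
  have hlow : (m^2)^α * (L * t^α) ≤ sInf ((fun R : ℝ => t * h * π ^ 2 / (R + c₆) ^ 2
      + (R - 3) ^ (θ + 1) / (2 ^ θ * (θ + 1))) '' Set.Ioi 3) := by
    apply le_csInf (Set.nonempty_Ioi.image _)
    rintro x ⟨R, hR, rfl⟩
    simp only [Set.mem_Ioi] at hR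
    have hS : (0:ℝ) < R + c₆ := by linarith
    have eB : t * h * π ^ 2 = t * B := by rw [hBd]; ring
    by_cases hcase : c ≤ (1-m) * (R + c₆)
    · have hms : m * (R + c₆) ≤ R - 3 := by nlinarith [hcase, hcd]
      have key := amgm_applied (a := t*B) (m := m) (S := R + c₆) hθ (by positivity) hm0 hS
      have mono : (m*(R+c₆))^(θ+1) ≤ (R-3)^(θ+1) :=
        Real.rpow_le_rpow (by positivity) hms (by linarith)
      have const_eq : (3+θ)/(1+θ) * (m^2*(t*B)/4)^α = (m^2)^α * (L * t^α) := by
        rw [show m^2*(t*B)/4 = (m^2) * (t * (B/4)) by ring,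
          Real.mul_rpow (by positivity) (by positivity),
          Real.mul_rpow ht.le (by positivity), hLd]
        ring
      calc (m^2)^α * (L*t^α) = (3+θ)/(1+θ) * (m^2*(t*B)/4)^α := const_eq.symm
        _ ≤ t*B/(R+c₆)^2 + (m*(R+c₆))^(θ+1)/(2^θ*(θ+1)) := key
        _ ≤ t * h * π ^ 2 / (R + c₆) ^ 2 + (R-3)^(θ+1)/(2^θ*(θ+1)) := by
            rw [eB]; gcongr
    · push_neg at hcase
      have h2 : L * t^α ≤ t * B * (1-m)^2 / c^2 := by
        have ht' : t = t^(1-α) * t^α := by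
          calc t = t ^ (1:ℝ) := (Real.rpow_one t).symm
            _ = t ^ ((1-α)+α) := by norm_num
            _ = t^(1-α) * t^α := Real.rpow_add ht _ _
        have h1mpos : (0:ℝ) < 1 - m := by rw [h1m]; exact hδ0
        calc L * t^α = (L * c^2/(B*(1-m)^2)) * t^α * (B*(1-m)^2) / c^2 := by
              field_simp
          _ ≤ t^(1-α) * t^α * (B*(1-m)^2) / c^2 := by gcongr
          _ = t * B * (1-m)^2/c^2 := by rw [← ht']; ring
      have h3 : t * B * (1-m)^2 / c^2 ≤ t * B / (R+c₆)^2 := by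
        rw [div_le_div_iff₀ (by positivity) (by positivity)]
        have h1mpos : (0:ℝ) ≤ 1 - m := by rw [h1m]; exact hδ0.le
        have hsq : ((1-m)*(R+c₆))^2 ≤ c^2 :=
          pow_le_pow_left₀ (mul_nonneg h1mpos hS.le) hcase.le 2
        calc t*B*(1-m)^2*(R+c₆)^2 = t*B*((1-m)*(R+c₆))^2 := by ring
          _ ≤ t*B*c^2 := mul_le_mul_of_nonneg_left hsq (by positivity)
      have h4 : t * B / (R+c₆)^2 ≤ t * h * π ^ 2 / (R + c₆) ^ 2
          + (R-3)^(θ+1)/(2^θ*(θ+1)) := by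
        rw [eB]
        have : (0:ℝ) ≤ (R-3)^(θ+1)/(2^θ*(θ+1)) :=
          div_nonneg (Real.rpow_nonneg (by linarith) _) (by positivity)
        linarith
      have h5 : (m^2)^α ≤ 1 := Real.rpow_le_one (by positivity) (by nlinarith) hα0.le
      calc (m^2)^α * (L*t^α) ≤ 1 * (L*t^α) :=
            mul_le_mul_of_nonneg_right h5 (by positivity)
        _ = L*t^α := one_mul _
        _ ≤ _ := le_trans h2 (le_trans h3 h4)
  have hup := upper t ht
  have hinv : t^(-α) * t^α = 1 := by
    rw [← Real.rpow_add ht]; simp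
  have hg1 : t^(-α) * sInf ((fun R : ℝ => t * h * π ^ 2 / (R + c₆) ^ 2
      + (R - 3) ^ (θ + 1) / (2 ^ θ * (θ + 1))) '' Set.Ioi 3) ≤ L := by
    calc t^(-α) * sInf _ ≤ t^(-α) * (L*t^α) :=
          mul_le_mul_of_nonneg_left hup (by positivity)
      _ = L := by rw [show t^(-α)*(L*t^α) = L*(t^(-α)*t^α) by ring, hinv, mul_one]
  have hg2 : (m^2)^α * L ≤ t^(-α) * sInf ((fun R : ℝ => t * h * π ^ 2 / (R + c₆) ^ 2
      + (R - 3) ^ (θ + 1) / (2 ^ θ * (θ + 1))) '' Set.Ioi 3) := by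
    calc (m^2)^α * L = t^(-α) * ((m^2)^α * (L * t^α)) := by
          rw [show t^(-α) * ((m^2)^α * (L*t^α)) = ((m^2)^α * L) * (t^(-α)*t^α) by ring,
            hinv, mul_one]
      _ ≤ _ := mul_le_mul_of_nonneg_left hlow (by positivity)
  have hm2 : 1 - 2*δ ≤ (m^2)^α := by
    have e1 : (m^2:ℝ) ≤ 1 := by nlinarith
    have e3 : (m^2)^(1:ℝ) ≤ (m^2)^α := Real.rpow_le_rpow_of_exponent_ge (by positivity) e1 hα1.le
    rw [Real.rpow_one] at e3
    nlinarith
  have hδL : 2*(δ*L) ≤ ε/2 := by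
    have h' : δ * (4*L) ≤ ε := (le_div_iff₀ (by positivity)).mp hδε
    linarith
  have hmul : (1 - 2*δ) * L ≤ (m^2)^α * L := mul_le_mul_of_nonneg_right hm2 hL.le
  have hexp : (1 - 2*δ) * L = L - 2*(δ*L) := by ring
  rw [Real.dist_eq, abs_lt]
  constructor
  · linarith
  · linarith
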